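/- Suppose V = V₁ ⊕ V₂ is an orthogonal direct sum of two 2-dimensional subspaces (H(V₁,V₂) = 0), and let V₁∧V₂ ⊆ ⋀²V denote the image of V₁ ⊗ V₂ under v⊗w ↦ v∧w, so that ⋀²V = ⋀²V₁ ⊕ ⋀²V₂ ⊕ (V₁∧V₂). Then: (i) L(V₁∧V₂) ⊆ V₁∧V₂ and L(⋀²V₁ ⊕ ⋀²V₂) ⊆ ⋀²V₁ ⊕ ⋀²V₂; (ii) if g = g₁ ⊕ g₂ with g_i ∈ GU(V_i, H|_{V_i}) and ν(g₁) = ν(g₂), then ⋀²g acts on ⋀²V_i as multiplication by the scalar det(g_i) and maps V₁∧V₂ to itself by v∧w ↦ g₁(v)∧g₂(w). -/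

import Mathlib

/-- The canonical generator `v₁ ∧ ⋯ ∧ vₙ` of the `n`-th exterior power, as an element of the
submodule `⋀[E]^n V` of the exterior algebra. -/
noncomputable def wedgeι (E : Type*) [CommRing E] {V : Type*} [AddCommGroup V] [Module E V]
    (n : ℕ) (v : Fin n → V) : ⋀[E]^n V :=
  ⟨ExteriorAlgebra.ιMulti E n v, ExteriorAlgebra.ιMulti_range E n (Set.mem_range_self v)⟩

/-- The wedge (exterior) product `⋀²V × ⋀²V → ⋀⁴V`. -/
noncomputable def wedgeMul (E : Type*) [CommRing E] {V : Type*} [AddCommGroup V] [Module E V]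
    (x y : ⋀[E]^2 V) : ⋀[E]^4 V :=
  ⟨(x : ExteriorAlgebra E V) * (y : ExteriorAlgebra E V), by
    have h := Submodule.mul_mem_mul x.2 y.2
    have e : (⋀[E]^2 V) * (⋀[E]^2 V) = ⋀[E]^4 V := by
      show LinearMap.range (ExteriorAlgebra.ι E (M := V)) ^ 2 *
          LinearMap.range (ExteriorAlgebra.ι E (M := V)) ^ 2
        = LinearMap.range (ExteriorAlgebra.ι E (M := V)) ^ 4
      rw [← pow_add]
    exact e ▸ h⟩

section Aux

open ExteriorAlgebra Submodule

variable {E : Type*} [Field E] {V : Type*} [AddCommGroup V] [Module E V]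

@[simp] lemma aux_wedgeι_val (n : ℕ) (v : Fin n → V) :
    ((wedgeι E n v : ⋀[E]^n V) : ExteriorAlgebra E V) = ιMulti E n v := rfl

@[simp] lemma aux_wedgeMul_val (x y : ⋀[E]^2 V) :
    ((wedgeMul E x y : ⋀[E]^4 V) : ExteriorAlgebra E V) = (x : ExteriorAlgebra E V) * y := rfl

lemma aux_iMulti_two (v : Fin 2 → V) :
    ιMulti E 2 v = ι E (v 0) * ι E (v 1) := by
  simp [ιMulti_apply, List.ofFn_succ, Matrix.vecTail]

lemma aux_iMulti_four (v : Fin 4 → V) :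
    ιMulti E 4 v = ι E (v 0) * (ι E (v 1) * (ι E (v 2) * ι E (v 3))) := by
  simp [ιMulti_apply, List.ofFn_succ, Matrix.vecTail, mul_assoc, Function.comp]

lemma aux_eps_swap (x y : V) : ι E x * ι E y = -(ι E y * ι E x) :=
  eq_neg_of_add_eq_zero_left (ι_add_mul_swap x y)

lemma aux_perm_smul (e : Fin 4 → V) (w : Fin 4 → Fin 4) (hw : Function.Injective w) :
    ∃ s : E, (s = 1 ∨ s = -1) ∧ ιMulti E 4 (e ∘ w) = s • ιMulti E 4 e := by
  have hbij : Function.Bijective w := Finite.injective_iff_bijective.1 hw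
  set σ := Equiv.ofBijective w hbij with hσ
  have hcomp : e ∘ w = e ∘ σ := rfl
  rw [hcomp, (ιMulti E 4).map_perm e σ]
  rcases Int.units_eq_one_or (Equiv.Perm.sign σ) with h | h <;> rw [h]
  · exact ⟨1, Or.inl rfl, by simp⟩
  · exact ⟨-1, Or.inr rfl, by simp⟩

lemma aux_range_fin_two {α : Type*} (f : Fin 2 → α) : Set.range f = {f 0, f 1} := by
  ext x
  constructor
  · rintro ⟨i, rfl⟩; fin_cases i <;> simp
  · rintro (rfl | rfl) <;> exact Set.mem_range_self _

lemma aux_submodule_eq_span_pair (W : Submodule E V) (b : Module.Basis (Fin 2) E W) :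
    W = Submodule.span E {(b 0 : V), (b 1 : V)} := by
  have h := congrArg (Submodule.map W.subtype) b.span_eq
  rw [Submodule.map_span, Submodule.map_top, Submodule.range_subtype] at h
  have h2 : (⇑W.subtype '' Set.range ⇑b : Set V) = {(b 0 : V), (b 1 : V)} := by
    rw [aux_range_fin_two]; simp [Set.image_insert_eq]
  rw [h2] at h
  exact h.symm

lemma aux_lin_span_mem {R M N : Type*} [Semiring R] [AddCommMonoid M] [Module R M]
    [AddCommMonoid N] [Module R N] (g : M →ₗ[R] N) {s : Set M} {T : Submodule R N}
    (h : ∀ x ∈ s, g x ∈ T) : ∀ x ∈ Submodule.span R s, g x ∈ T := by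
  have hle : Submodule.span R s ≤ T.comap g := Submodule.span_le.2 fun y hy => h y hy
  exact fun x hx => hle hx

/-- Module-valued version of `AlternatingMap.eq_smul_basis_det`. -/
lemma aux_alt_eq_det_smul {R : Type*} [CommRing R] {M N : Type*} [AddCommGroup M] [Module R M]
    [AddCommGroup N] [Module R N] {ι : Type*} [Fintype ι] [DecidableEq ι] (b : Module.Basis ι R M)
    (f : M [⋀^ι]→ₗ[R] N) (v : ι → M) : f v = b.det v • f b := by
  let F : M [⋀^ι]→ₗ[R] N :=
    { toMultilinearMap := MultilinearMap.smulRight b.det.toMultilinearMap (f b)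
      map_eq_zero_of_eq' := by
        intro u i j hij hne
        show b.det u • f ⇑b = 0
        rw [AlternatingMap.map_eq_zero_of_eq b.det u hij hne, zero_smul] }
  have hF : ∀ u, F u = b.det u • f b := fun u => rfl
  have : f = F := by
    refine Module.Basis.ext_alternating b fun i hi => ?_
    let σ : Equiv.Perm ι := Equiv.ofBijective i (Finite.injective_iff_bijective.1 hi)
    show f (b ∘ σ) = F (b ∘ σ)
    have h1 : f (b ∘ σ) = Equiv.Perm.sign σ • f b := f.map_perm b σ
    have h2 : F (b ∘ σ) = Equiv.Perm.sign σ • f b := by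
      rw [hF]
      rw [b.det.map_perm b σ, Module.Basis.det_self]
      rcases Int.units_eq_one_or (Equiv.Perm.sign σ) with h | h <;> rw [h] <;> simp
    rw [h1, h2]
  rw [this, hF, hF, Module.Basis.det_self, one_smul]

lemma aux_w2_add_left (x x' y : V) :
    wedgeι E 2 ![x + x', y] = wedgeι E 2 ![x, y] + wedgeι E 2 ![x', y] :=
  Subtype.ext <| by simp [aux_iMulti_two, add_mul]

lemma aux_w2_add_right (x y y' : V) :
    wedgeι E 2 ![x, y + y'] = wedgeι E 2 ![x, y] + wedgeι E 2 ![x, y'] :=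
  Subtype.ext <| by simp [aux_iMulti_two, mul_add]

lemma aux_w2_smul_left (a : E) (x y : V) :
    wedgeι E 2 ![a • x, y] = a • wedgeι E 2 ![x, y] :=
  Subtype.ext <| by simp [aux_iMulti_two, smul_mul_assoc]

lemma aux_w2_smul_right (a : E) (x y : V) :
    wedgeι E 2 ![x, a • y] = a • wedgeι E 2 ![x, y] :=
  Subtype.ext <| by simp [aux_iMulti_two, mul_smul_comm]

lemma aux_w2_zero_left (y : V) : wedgeι E 2 ![(0 : V), y] = 0 :=
  Subtype.ext <| by simp [aux_iMulti_two]

lemma aux_w2_zero_right (x : V) : wedgeι E 2 ![x, (0 : V)] = 0 :=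
  Subtype.ext <| by simp [aux_iMulti_two]

lemma aux_w2_swap (x y : V) : wedgeι E 2 ![y, x] = -wedgeι E 2 ![x, y] :=
  Subtype.ext <| by
    simp only [aux_wedgeι_val, Submodule.coe_neg]
    rw [aux_iMulti_two, aux_iMulti_two]
    simpa using aux_eps_swap (E := E) y x

lemma aux_w2_same (x : V) : wedgeι E 2 ![x, x] = 0 :=
  Subtype.ext <| by simp [aux_iMulti_two, ι_sq_zero]

lemma aux_wM_add_left (x y z : ⋀[E]^2 V) :
    wedgeMul E (x + y) z = wedgeMul E x z + wedgeMul E y z :=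
  Subtype.ext <| by simp [add_mul]

lemma aux_wM_smul_left (a : E) (x z : ⋀[E]^2 V) :
    wedgeMul E (a • x) z = a • wedgeMul E x z :=
  Subtype.ext <| by simp [smul_mul_assoc]

lemma aux_wM_zero_left (z : ⋀[E]^2 V) : wedgeMul E 0 z = 0 :=
  Subtype.ext <| by simp

/-- wedge of two elements of `V₁` lies in any submodule containing the basic wedges. -/
lemma aux_wedge_mem_span (S : Submodule E (⋀[E]^2 V)) (s₁ s₂ : Set V)
    (hbase : ∀ x ∈ s₁, ∀ y ∈ s₂, wedgeι E 2 ![x, y] ∈ S) :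
    ∀ v ∈ Submodule.span E s₁, ∀ w ∈ Submodule.span E s₂, wedgeι E 2 ![v, w] ∈ S := by
  intro v hv
  induction hv using Submodule.span_induction with
  | mem x hx =>
    intro w hw
    induction hw using Submodule.span_induction with
    | mem y hy => exact hbase x hx y hy
    | zero => rw [aux_w2_zero_right]; exact S.zero_mem
    | add y y' _ _ ih ih' => rw [aux_w2_add_right]; exact S.add_mem ih ih'
    | smul a y _ ih => rw [aux_w2_smul_right]; exact S.smul_mem a ih
  | zero => intro w hw; rw [aux_w2_zero_left]; exact S.zero_mem
  | add x x' _ _ ih ih' => intro w hw; rw [aux_w2_add_left]; exact S.add_mem (ih w hw) (ih' w hw)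
  | smul a x _ ih => intro w hw; rw [aux_w2_smul_left]; exact S.smul_mem a (ih w hw)

end Aux

/-- `h` is a form on `⋀^r V`, additive in each variable, `ρ`-sesquilinear, conjugate-symmetric,
whose value on decomposable wedges is the determinant `det (H (v i) (w j))`. -/
def IsDetForm {E : Type*} [Field E] (ρ : E →+* E)
    {V : Type*} [AddCommGroup V] [Module E V] (H : V → V → E) (r : ℕ)
    (h : (⋀[E]^r V) → (⋀[E]^r V) → E) : Prop :=
  (∀ x y z, h (x + y) z = h x z + h y z) ∧
  (∀ x y z, h x (y + z) = h x y + h x z) ∧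
  (∀ (a b : E) (x y : ⋀[E]^r V), h (a • x) (b • y) = ρ a * h x y * b) ∧
  (∀ x y, h x y = ρ (h y x)) ∧
  (∀ v w : Fin r → V,
    h (wedgeι E r v) (wedgeι E r w) = (Matrix.of fun i j => H (v i) (w j)).det)


/-- The submodule of `⋀²V` spanned by wedges `v ∧ w` with `v ∈ W₁`, `w ∈ W₂`. -/
noncomputable def wedgeSpan (E : Type*) [Field E] {V : Type*} [AddCommGroup V] [Module E V]
    (W₁ W₂ : Submodule E V) : Submodule E ↥(⋀[E]^2 V) :=
  Submodule.span E {z | ∃ v ∈ W₁, ∃ w ∈ W₂, z = wedgeι E 2 ![v, w]}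

set_option maxHeartbeats 2000000 in
open ExteriorAlgebra Submodule in
/-- Let `V = V₁ ⊕ V₂` be an orthogonal direct sum of two 2-dimensional
subspaces. Then (i) `L` preserves both `V₁∧V₂` and `⋀²V₁ ⊕ ⋀²V₂`; (ii) if `g = g₁ ⊕ g₂` with
`gᵢ ∈ GU(Vᵢ)` and `ν(g₁) = ν(g₂)`, then `⋀²g` acts on `⋀²Vᵢ` by the scalar `det gᵢ` and maps
`V₁∧V₂` to itself by `v∧w ↦ g₁v ∧ g₂w`. -/
theorem L_and_exterior_square_on_decomposition
    {F E : Type*} [Field F] [CharZero F] [Field E] [Algebra F E]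
    (hquad : Module.finrank F E = 2)
    (ρ : E →+* E) (hρ_invol : ∀ a, ρ (ρ a) = a) (hρ_ne : ρ ≠ RingHom.id E)
    (hρ_fixF : ∀ c : F, ρ (algebraMap F E c) = algebraMap F E c)
    (hρ_fixed_field : ∀ a : E, ρ a = a → ∃ c : F, algebraMap F E c = a)
    {V : Type*} [AddCommGroup V] [Module E V] [FiniteDimensional E V]
    (hV4 : Module.finrank E V = 4)
    (H : V → V → E)
    (H_add_left : ∀ x y z, H (x + y) z = H x z + H y z)
    (H_add_right : ∀ x y z, H x (y + z) = H x y + H x z)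
    (H_smul : ∀ (a b : E) (x y : V), H (a • x) (b • y) = ρ a * H x y * b)
    (H_conj : ∀ x y, H x y = ρ (H y x))
    (H_nondeg : ∀ x, (∀ y, H x y = 0) → x = 0)
    (d : (⋀[E]^4 V) ≃ₗ[E] E)
    (h₂ : (⋀[E]^2 V) → (⋀[E]^2 V) → E) (hh₂ : IsDetForm ρ H 2 h₂)
    (L : (⋀[E]^2 V) → (⋀[E]^2 V))
    (L_add : ∀ x y, L (x + y) = L x + L y)
    (L_smul : ∀ (a : E) (x : ⋀[E]^2 V), L (a • x) = ρ a • L x)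
    (L_def : ∀ x y : ⋀[E]^2 V, d (wedgeMul E (L x) y) = h₂ x y)
    (V₁ V₂ : Submodule E V) (hcompl : IsCompl V₁ V₂)
    (hV₁ : Module.finrank E V₁ = 2) (hV₂ : Module.finrank E V₂ = 2)
    (horth : ∀ x ∈ V₁, ∀ y ∈ V₂, H x y = 0) :
    (∀ z ∈ wedgeSpan E V₁ V₂, L z ∈ wedgeSpan E V₁ V₂) ∧
    (∀ z ∈ wedgeSpan E V₁ V₁ ⊔ wedgeSpan E V₂ V₂,
      L z ∈ wedgeSpan E V₁ V₁ ⊔ wedgeSpan E V₂ V₂) ∧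
    (∀ (g : V ≃ₗ[E] V) (ν : F), ν ≠ 0 →
      (∀ x y, H (g x) (g y) = algebraMap F E ν * H x y) →
      ∀ (hg₁ : ∀ x ∈ V₁, (g : V →ₗ[E] V) x ∈ V₁) (hg₂ : ∀ x ∈ V₂, (g : V →ₗ[E] V) x ∈ V₂)
        (Λg : (⋀[E]^2 V) →ₗ[E] (⋀[E]^2 V)),
        (∀ v : Fin 2 → V, Λg (wedgeι E 2 v) = wedgeι E 2 (⇑g ∘ v)) →
        (∀ z ∈ wedgeSpan E V₁ V₁,
          Λg z = LinearMap.det ((g : V →ₗ[E] V).restrict hg₁) • z) ∧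
        (∀ z ∈ wedgeSpan E V₂ V₂,
          Λg z = LinearMap.det ((g : V →ₗ[E] V).restrict hg₂) • z) ∧
        (∀ x ∈ V₁, ∀ y ∈ V₂,
          Λg (wedgeι E 2 ![x, y]) = wedgeι E 2 ![g x, g y] ∧
          Λg (wedgeι E 2 ![x, y]) ∈ wedgeSpan E V₁ V₂))  := by
  classical
  -- ### Setup: bases and the distinguished vectors
  set b₁ : Module.Basis (Fin 2) E V₁ := Module.finBasisOfFinrankEq E V₁ hV₁ with hb₁
  set b₂ : Module.Basis (Fin 2) E V₂ := Module.finBasisOfFinrankEq E V₂ hV₂ with hb₂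
  set e : Fin 4 → V := ![(b₁ 0 : V), (b₁ 1 : V), (b₂ 0 : V), (b₂ 1 : V)] with he_def
  have he0 : e 0 ∈ V₁ := (b₁ 0).2
  have he1 : e 1 ∈ V₁ := (b₁ 1).2
  have he2 : e 2 ∈ V₂ := (b₂ 0).2
  have he3 : e 3 ∈ V₂ := (b₂ 1).2
  have hV1span : V₁ = span E {e 0, e 1} := aux_submodule_eq_span_pair V₁ b₁
  have hV2span : V₂ = span E {e 2, e 3} := aux_submodule_eq_span_pair V₂ b₂
  have hVspan : ∀ v : V, v ∈ span E (Set.range e) := by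
    intro v
    have hv : v ∈ V₁ ⊔ V₂ := by rw [hcompl.sup_eq_top]; trivial
    obtain ⟨a, ha, b, hb, rfl⟩ := Submodule.mem_sup.mp hv
    have hsub1 : ({e 0, e 1} : Set V) ⊆ Set.range e := by
      intro t ht
      rcases ht with rfl | ht
      · exact ⟨0, rfl⟩
      · rw [Set.mem_singleton_iff] at ht; exact ⟨1, ht.symm⟩
    have hsub2 : ({e 2, e 3} : Set V) ⊆ Set.range e := by
      intro t ht
      rcases ht with rfl | ht
      · exact ⟨2, rfl⟩
      · rw [Set.mem_singleton_iff] at ht; exact ⟨3, ht.symm⟩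
    exact add_mem (span_mono hsub1 (hV1span ▸ ha)) (span_mono hsub2 (hV2span ▸ hb))
  -- ### the basic wedges
  set m : Fin 4 → Fin 4 → (⋀[E]^2 V) := fun i j => wedgeι E 2 ![e i, e j] with hm_def
  set top4 : ⋀[E]^4 V := wedgeι E 4 e with htop_def
  have hm_val : ∀ i j, ((m i j : ⋀[E]^2 V) : ExteriorAlgebra E V) = ι E (e i) * ι E (e j) := by
    intro i j
    show (ιMulti E 2 ![e i, e j] : ExteriorAlgebra E V) = _
    rw [aux_iMulti_two]; rfl
  have hprod_val : ∀ i j k l : Fin 4,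
      ((wedgeMul E (m i j) (m k l) : ⋀[E]^4 V) : ExteriorAlgebra E V)
        = ιMulti E 4 (e ∘ ![i, j, k, l]) := by
    intro i j k l
    rw [aux_wedgeMul_val, hm_val, hm_val, aux_iMulti_four]
    show _ = ι E (e i) * (ι E (e j) * (ι E (e k) * ι E (e l)))
    rw [mul_assoc]
  have hwM0 : ∀ i j k l : Fin 4, ¬ Function.Injective ![i, j, k, l] →
      wedgeMul E (m i j) (m k l) = 0 := by
    intro i j k l hinj
    apply Subtype.ext
    rw [hprod_val]
    rw [Function.not_injective_iff] at hinj
    obtain ⟨a, b, hab, hne⟩ := hinj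
    have hz : ιMulti E 4 (e ∘ ![i, j, k, l]) = 0 :=
      AlternatingMap.map_eq_zero_of_eq _ _
        (show (e ∘ ![i, j, k, l]) a = (e ∘ ![i, j, k, l]) b from congrArg e hab) hne
    rw [hz]; rfl
  have hwMs : ∀ i j k l : Fin 4, Function.Injective ![i, j, k, l] →
      ∃ s : E, (s = 1 ∨ s = -1) ∧ wedgeMul E (m i j) (m k l) = s • top4 := by
    intro i j k l hinj
    obtain ⟨s, hs1, hs⟩ := aux_perm_smul (E := E) e ![i, j, k, l] hinj
    refine ⟨s, hs1, Subtype.ext ?_⟩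
    rw [hprod_val, hs]
    rfl
  -- ### nondegeneracy of the top wedge
  have htopspan : (⋀[E]^4 V : Submodule E (ExteriorAlgebra E V))
      ≤ span E {(top4 : ExteriorAlgebra E V)} := by
    have base0 : ∀ i j k l : Fin 4,
        ι E (e i) * (ι E (e j) * (ι E (e k) * ι E (e l)))
          ∈ span E {(top4 : ExteriorAlgebra E V)} := by
      intro i j k l
      have heq : ι E (e i) * (ι E (e j) * (ι E (e k) * ι E (e l)))
          = ιMulti E 4 (e ∘ ![i, j, k, l]) := by
        rw [aux_iMulti_four]; rfl
      rw [heq]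
      by_cases hinj : Function.Injective ![i, j, k, l]
      · obtain ⟨s, _, hs⟩ := aux_perm_smul (E := E) e ![i, j, k, l] hinj
        rw [hs]
        exact smul_mem _ _ (subset_span rfl)
      · rw [Function.not_injective_iff] at hinj
        obtain ⟨a, b, hab, hne⟩ := hinj
        have hz : ιMulti E 4 (e ∘ ![i, j, k, l]) = 0 :=
          AlternatingMap.map_eq_zero_of_eq _ _
            (show (e ∘ ![i, j, k, l]) a = (e ∘ ![i, j, k, l]) b from congrArg e hab) hne
        rw [hz]
        exact zero_mem _
    have s3 : ∀ i j k : Fin 4, ∀ x ∈ span E (Set.range e),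
        ι E (e i) * (ι E (e j) * (ι E (e k) * ι E x))
          ∈ span E {(top4 : ExteriorAlgebra E V)} := by
      intro i j k
      apply aux_lin_span_mem ((LinearMap.mulLeft E (ι E (e i))).comp
        (((LinearMap.mulLeft E (ι E (e j))).comp
          (((LinearMap.mulLeft E (ι E (e k))).comp (ι E))))))
      rintro _ ⟨l, rfl⟩
      exact base0 i j k l
    have s2 : ∀ i j : Fin 4, ∀ x ∈ span E (Set.range e), ∀ y ∈ span E (Set.range e),
        ι E (e i) * (ι E (e j) * (ι E y * ι E x))
          ∈ span E {(top4 : ExteriorAlgebra E V)} := by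
      intro i j x hx
      apply aux_lin_span_mem ((LinearMap.mulLeft E (ι E (e i))).comp
        (((LinearMap.mulLeft E (ι E (e j))).comp
          (((LinearMap.mulRight E (ι E x)).comp (ι E))))))
      rintro _ ⟨k, rfl⟩
      exact s3 i j k x hx
    have s1 : ∀ i : Fin 4, ∀ x ∈ span E (Set.range e), ∀ y ∈ span E (Set.range e),
        ∀ z ∈ span E (Set.range e),
        ι E (e i) * (ι E z * (ι E y * ι E x))
          ∈ span E {(top4 : ExteriorAlgebra E V)} := by
      intro i x hx y hy
      apply aux_lin_span_mem ((LinearMap.mulLeft E (ι E (e i))).comp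
        (((LinearMap.mulRight E (ι E y * ι E x)).comp (ι E))))
      rintro _ ⟨j, rfl⟩
      exact s2 i j x hx y hy
    have s0 : ∀ x ∈ span E (Set.range e), ∀ y ∈ span E (Set.range e),
        ∀ z ∈ span E (Set.range e), ∀ a ∈ span E (Set.range e),
        ι E a * (ι E z * (ι E y * ι E x))
          ∈ span E {(top4 : ExteriorAlgebra E V)} := by
      intro x hx y hy z hz
      apply aux_lin_span_mem ((LinearMap.mulRight E (ι E z * (ι E y * ι E x))).comp (ι E))
      rintro _ ⟨i, rfl⟩
      exact s1 i x hx y hy z hz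
    have hfin : Submodule.span E (Set.range (ιMulti E 4 (M := V)))
        ≤ span E {(top4 : ExteriorAlgebra E V)} := by
      apply Submodule.span_le.2
      rintro _ ⟨v, rfl⟩
      rw [aux_iMulti_four]
      exact s0 _ (hVspan (v 3)) _ (hVspan (v 2)) _ (hVspan (v 1)) _ (hVspan (v 0))
    exact le_trans (le_of_eq (ιMulti_span_fixedDegree E 4).symm) hfin
  have htop_ne : top4 ≠ 0 := by
    intro h0
    have hA : ((top4 : ⋀[E]^4 V) : ExteriorAlgebra E V) = 0 := by rw [h0]; rfl
    have hbot : ∀ y : ⋀[E]^4 V, y = 0 := by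
      intro y
      have hy := htopspan y.2
      rw [hA, Submodule.span_zero_singleton, Submodule.mem_bot] at hy
      exact Subtype.ext hy
    have h1 : (1 : E) = 0 := by
      have hd := d.apply_symm_apply 1
      rw [hbot (d.symm 1), d.map_zero] at hd
      exact hd.symm
    exact one_ne_zero h1
  have hD : d top4 ≠ 0 := by
    intro h
    exact htop_ne (by rwa [LinearEquiv.map_eq_zero_iff] at h)
  -- ### the relevant spans
  set P := wedgeSpan E V₁ V₂ with hP_def
  set Q₁ := wedgeSpan E V₁ V₁ with hQ₁_def
  set Q₂ := wedgeSpan E V₂ V₂ with hQ₂_def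
  have hmemP : ∀ i j : Fin 4, e i ∈ V₁ → e j ∈ V₂ → m i j ∈ P := fun i j hi hj =>
    subset_span ⟨e i, hi, e j, hj, rfl⟩
  have hmemQ₁ : ∀ i j : Fin 4, e i ∈ V₁ → e j ∈ V₁ → m i j ∈ Q₁ := fun i j hi hj =>
    subset_span ⟨e i, hi, e j, hj, rfl⟩
  have hmemQ₂ : ∀ i j : Fin 4, e i ∈ V₂ → e j ∈ V₂ → m i j ∈ Q₂ := fun i j hi hj =>
    subset_span ⟨e i, hi, e j, hj, rfl⟩
  have hQ₁span : Q₁ ≤ span E {m 0 1} := by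
    apply Submodule.span_le.2
    rintro z ⟨v, hv, w, hw, rfl⟩
    have hv' : v ∈ span E {e 0, e 1} := by rw [← hV1span]; exact hv
    have hw' : w ∈ span E {e 0, e 1} := by rw [← hV1span]; exact hw
    refine aux_wedge_mem_span _ _ _ ?_ v hv' w hw'
    intro x hx y hy
    have hx' : x = e 0 ∨ x = e 1 := by simpa using hx
    have hy' : y = e 0 ∨ y = e 1 := by simpa using hy
    rcases hx' with rfl | rfl <;> rcases hy' with rfl | rfl
    · rw [aux_w2_same]; exact zero_mem _
    · exact subset_span rfl
    · rw [aux_w2_swap]; exact neg_mem (subset_span rfl)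
    · rw [aux_w2_same]; exact zero_mem _
  have hQ₂span : Q₂ ≤ span E {m 2 3} := by
    apply Submodule.span_le.2
    rintro z ⟨v, hv, w, hw, rfl⟩
    have hv' : v ∈ span E {e 2, e 3} := by rw [← hV2span]; exact hv
    have hw' : w ∈ span E {e 2, e 3} := by rw [← hV2span]; exact hw
    refine aux_wedge_mem_span _ _ _ ?_ v hv' w hw'
    intro x hx y hy
    have hx' : x = e 2 ∨ x = e 3 := by simpa using hx
    have hy' : y = e 2 ∨ y = e 3 := by simpa using hy
    rcases hx' with rfl | rfl <;> rcases hy' with rfl | rfl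
    · rw [aux_w2_same]; exact zero_mem _
    · exact subset_span rfl
    · rw [aux_w2_swap]; exact neg_mem (subset_span rfl)
    · rw [aux_w2_same]; exact zero_mem _
  set gmix : Fin 4 → (⋀[E]^2 V) := ![m 0 2, m 0 3, m 1 2, m 1 3] with hgmix_def
  have hPspan : P ≤ span E (Set.range gmix) := by
    apply Submodule.span_le.2
    rintro z ⟨v, hv, w, hw, rfl⟩
    have hv' : v ∈ span E {e 0, e 1} := by rw [← hV1span]; exact hv
    have hw' : w ∈ span E {e 2, e 3} := by rw [← hV2span]; exact hw
    refine aux_wedge_mem_span _ _ _ ?_ v hv' w hw'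
    intro x hx y hy
    have hx' : x = e 0 ∨ x = e 1 := by simpa using hx
    have hy' : y = e 2 ∨ y = e 3 := by simpa using hy
    rcases hx' with rfl | rfl <;> rcases hy' with rfl | rfl
    · exact subset_span ⟨0, rfl⟩
    · exact subset_span ⟨1, rfl⟩
    · exact subset_span ⟨2, rfl⟩
    · exact subset_span ⟨3, rfl⟩
  have hm_memPQ : ∀ i j : Fin 4, m i j ∈ P ⊔ (Q₁ ⊔ Q₂) := by
    intro i j
    have hei : ∀ k : Fin 4, e k ∈ V₁ ∨ e k ∈ V₂ := by
      intro k
      fin_cases k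
      exacts [Or.inl he0, Or.inl he1, Or.inr he2, Or.inr he3]
    rcases hei i with hi | hi <;> rcases hei j with hj | hj
    · exact mem_sup_right (mem_sup_left (hmemQ₁ i j hi hj))
    · exact mem_sup_left (hmemP i j hi hj)
    · have hswap : m i j = - m j i := aux_w2_swap (e j) (e i)
      rw [hswap]
      exact neg_mem (mem_sup_left (hmemP j i hj hi))
    · exact mem_sup_right (mem_sup_right (hmemQ₂ i j hi hj))
  have hsup : ∀ x : ⋀[E]^2 V, x ∈ P ⊔ (Q₁ ⊔ Q₂) := by
    intro x
    set U : Submodule E (ExteriorAlgebra E V) :=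
      Submodule.map (⋀[E]^2 V).subtype (P ⊔ (Q₁ ⊔ Q₂)) with hU_def
    have hU1 : ∀ j : Fin 4, ∀ a ∈ span E (Set.range e), ι E a * ι E (e j) ∈ U := by
      intro j
      apply aux_lin_span_mem ((LinearMap.mulRight E (ι E (e j))).comp (ι E))
      rintro _ ⟨i, rfl⟩
      show ι E (e i) * ι E (e j) ∈ U
      rw [← hm_val i j]
      exact Submodule.mem_map_of_mem (hm_memPQ i j)
    have hU2 : ∀ a ∈ span E (Set.range e), ∀ b ∈ span E (Set.range e), ι E a * ι E b ∈ U := by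
      intro a ha
      apply aux_lin_span_mem ((LinearMap.mulLeft E (ι E a)).comp (ι E))
      rintro _ ⟨j, rfl⟩
      exact hU1 j a ha
    have hx2 : (x : ExteriorAlgebra E V) ∈ span E (Set.range (ιMulti E 2 (M := V))) := by
      rw [ιMulti_span_fixedDegree]; exact x.2
    have hxU : (x : ExteriorAlgebra E V) ∈ U := by
      refine Submodule.span_le.2 ?_ hx2
      rintro _ ⟨v, rfl⟩
      rw [aux_iMulti_two]
      exact hU2 (v 0) (hVspan _) (v 1) (hVspan _)
    obtain ⟨y, hy, hyx⟩ := hxU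
    obtain rfl : y = x := Subtype.coe_injective hyx
    exact hy
  have hpair0 : ∀ y : ⋀[E]^2 V, (∀ i : Fin 4, wedgeMul E (gmix i) y = 0) →
      ∀ p ∈ span E (Set.range gmix), d (wedgeMul E p y) = 0 := by
    intro y hy p hp
    induction hp using Submodule.span_induction with
    | mem w hw =>
      obtain ⟨i, rfl⟩ := hw
      rw [hy i, d.map_zero]
    | zero => rw [aux_wM_zero_left, d.map_zero]
    | add u u' _ _ ih ih' => rw [aux_wM_add_left, d.map_add, ih, ih', add_zero]
    | smul a u _ ih => rw [aux_wM_smul_left, d.map_smul, ih, smul_zero]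
  have dv0 : ∀ i j k l : Fin 4, ¬ Function.Injective ![i, j, k, l] →
      d (wedgeMul E (m i j) (m k l)) = 0 := by
    intro i j k l h
    rw [hwM0 i j k l h, d.map_zero]
  have dvs : ∀ i j k l : Fin 4, Function.Injective ![i, j, k, l] →
      ∃ s : E, s ≠ 0 ∧ d (wedgeMul E (m i j) (m k l)) = s * d top4 := by
    intro i j k l h
    obtain ⟨s, hs1, hs⟩ := hwMs i j k l h
    refine ⟨s, ?_, by rw [hs, d.map_smul, smul_eq_mul]⟩
    rcases hs1 with rfl | rfl
    · exact one_ne_zero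
    · exact neg_ne_zero.mpr one_ne_zero
  have M1 : ∀ x : ⋀[E]^2 V, d (wedgeMul E x (m 0 1)) = 0 → d (wedgeMul E x (m 2 3)) = 0 →
      x ∈ P := by
    intro x h01 h23
    obtain ⟨p, hp, q, hq, hx⟩ := Submodule.mem_sup.mp (hsup x)
    obtain ⟨q1, hq1, q2, hq2, hq12⟩ := Submodule.mem_sup.mp hq
    obtain ⟨α, hα⟩ := Submodule.mem_span_singleton.mp (hQ₁span hq1)
    obtain ⟨β, hβ⟩ := Submodule.mem_span_singleton.mp (hQ₂span hq2)
    have key : ∀ y : ⋀[E]^2 V, d (wedgeMul E x y)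
        = d (wedgeMul E p y)
          + (α * d (wedgeMul E (m 0 1) y) + β * d (wedgeMul E (m 2 3) y)) := by
      intro y
      rw [← hx, ← hq12, ← hα, ← hβ]
      simp only [aux_wM_add_left, aux_wM_smul_left, d.map_add, d.map_smul, smul_eq_mul]
    have hp01 : d (wedgeMul E p (m 0 1)) = 0 := by
      refine hpair0 (m 0 1) ?_ p (hPspan hp)
      intro i; fin_cases i
      · exact hwM0 0 2 0 1 (by decide)
      · exact hwM0 0 3 0 1 (by decide)
      · exact hwM0 1 2 0 1 (by decide)
      · exact hwM0 1 3 0 1 (by decide)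
    have hp23 : d (wedgeMul E p (m 2 3)) = 0 := by
      refine hpair0 (m 2 3) ?_ p (hPspan hp)
      intro i; fin_cases i
      · exact hwM0 0 2 2 3 (by decide)
      · exact hwM0 0 3 2 3 (by decide)
      · exact hwM0 1 2 2 3 (by decide)
      · exact hwM0 1 3 2 3 (by decide)
    obtain ⟨s1, hs1ne, hs1⟩ := dvs 2 3 0 1 (by decide)
    obtain ⟨s2, hs2ne, hs2⟩ := dvs 0 1 2 3 (by decide)
    have e1 := h01
    rw [key, hp01, dv0 0 1 0 1 (by decide), hs1] at e1
    simp only [mul_zero, zero_add, add_zero] at e1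
    have hβ0 : β = 0 := by
      rcases mul_eq_zero.mp e1 with h | h
      · exact h
      · rcases mul_eq_zero.mp h with h' | h'
        · exact absurd h' hs1ne
        · exact absurd h' hD
    have e2 := h23
    rw [key, hp23, dv0 2 3 2 3 (by decide), hs2] at e2
    simp only [mul_zero, zero_add, add_zero] at e2
    have hα0 : α = 0 := by
      rcases mul_eq_zero.mp e2 with h | h
      · exact h
      · rcases mul_eq_zero.mp h with h' | h'
        · exact absurd h' hs2ne
        · exact absurd h' hD
    rw [← hx, ← hq12, ← hα, ← hβ, hα0, hβ0]
    simpa using hp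
  have M2 : ∀ x : ⋀[E]^2 V, d (wedgeMul E x (m 0 2)) = 0 → d (wedgeMul E x (m 0 3)) = 0 →
      d (wedgeMul E x (m 1 2)) = 0 → d (wedgeMul E x (m 1 3)) = 0 → x ∈ Q₁ ⊔ Q₂ := by
    intro x h02 h03 h12 h13
    obtain ⟨p, hp, q, hq, hx⟩ := Submodule.mem_sup.mp (hsup x)
    obtain ⟨q1, hq1, q2, hq2, hq12⟩ := Submodule.mem_sup.mp hq
    obtain ⟨α, hα⟩ := Submodule.mem_span_singleton.mp (hQ₁span hq1)
    obtain ⟨β, hβ⟩ := Submodule.mem_span_singleton.mp (hQ₂span hq2)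
    obtain ⟨c, hc⟩ := (mem_span_range_iff_exists_fun E).mp (hPspan hp)
    have key : ∀ y : ⋀[E]^2 V, d (wedgeMul E x y)
        = (c 0 * d (wedgeMul E (m 0 2) y) + c 1 * d (wedgeMul E (m 0 3) y)
            + c 2 * d (wedgeMul E (m 1 2) y) + c 3 * d (wedgeMul E (m 1 3) y))
          + (α * d (wedgeMul E (m 0 1) y) + β * d (wedgeMul E (m 2 3) y)) := by
      intro y
      rw [← hx, ← hq12, ← hα, ← hβ, ← hc, Fin.sum_univ_four]
      show d (wedgeMul E ((c 0 • m 0 2 + c 1 • m 0 3 + c 2 • m 1 2 + c 3 • m 1 3)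
        + (α • m 0 1 + β • m 2 3)) y) = _
      simp only [aux_wM_add_left, aux_wM_smul_left, d.map_add, d.map_smul, smul_eq_mul]
    have hkill : ∀ (k l : Fin 4) (i₀ : Fin 4), d (wedgeMul E x (m k l)) = 0 → True := fun _ _ _ _ => trivial
    have hc3 : c 3 = 0 := by
      have e1 := h02
      rw [key, dv0 0 2 0 2 (by decide), dv0 0 3 0 2 (by decide), dv0 1 2 0 2 (by decide),
          dv0 0 1 0 2 (by decide), dv0 2 3 0 2 (by decide)] at e1
      obtain ⟨s, hsne, hs⟩ := dvs 1 3 0 2 (by decide)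
      rw [hs] at e1
      simp only [mul_zero, zero_add, add_zero] at e1
      rcases mul_eq_zero.mp e1 with h | h
      · exact h
      · rcases mul_eq_zero.mp h with h' | h'
        · exact absurd h' hsne
        · exact absurd h' hD
    have hc2 : c 2 = 0 := by
      have e1 := h03
      rw [key, dv0 0 2 0 3 (by decide), dv0 0 3 0 3 (by decide), dv0 1 3 0 3 (by decide),
          dv0 0 1 0 3 (by decide), dv0 2 3 0 3 (by decide)] at e1
      obtain ⟨s, hsne, hs⟩ := dvs 1 2 0 3 (by decide)
      rw [hs] at e1
      simp only [mul_zero, zero_add, add_zero] at e1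
      rcases mul_eq_zero.mp e1 with h | h
      · exact h
      · rcases mul_eq_zero.mp h with h' | h'
        · exact absurd h' hsne
        · exact absurd h' hD
    have hc1 : c 1 = 0 := by
      have e1 := h12
      rw [key, dv0 0 2 1 2 (by decide), dv0 1 2 1 2 (by decide), dv0 1 3 1 2 (by decide),
          dv0 0 1 1 2 (by decide), dv0 2 3 1 2 (by decide)] at e1
      obtain ⟨s, hsne, hs⟩ := dvs 0 3 1 2 (by decide)
      rw [hs] at e1
      simp only [mul_zero, zero_add, add_zero] at e1
      rcases mul_eq_zero.mp e1 with h | h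
      · exact h
      · rcases mul_eq_zero.mp h with h' | h'
        · exact absurd h' hsne
        · exact absurd h' hD
    have hc0 : c 0 = 0 := by
      have e1 := h13
      rw [key, dv0 0 3 1 3 (by decide), dv0 1 2 1 3 (by decide), dv0 1 3 1 3 (by decide),
          dv0 0 1 1 3 (by decide), dv0 2 3 1 3 (by decide)] at e1
      obtain ⟨s, hsne, hs⟩ := dvs 0 2 1 3 (by decide)
      rw [hs] at e1
      simp only [mul_zero, zero_add, add_zero] at e1
      rcases mul_eq_zero.mp e1 with h | h
      · exact h
      · rcases mul_eq_zero.mp h with h' | h'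
        · exact absurd h' hsne
        · exact absurd h' hD
    have hp0 : p = 0 := by
      rw [← hc, Fin.sum_univ_four]
      show c 0 • m 0 2 + c 1 • m 0 3 + c 2 • m 1 2 + c 3 • m 1 3 = 0
      rw [hc0, hc1, hc2, hc3]
      simp
    rw [← hx, hp0, zero_add]
    exact hq
  have hm_wedge : ∀ i j : Fin 4, m i j = wedgeι E 2 ![e i, e j] := fun _ _ => rfl
  obtain ⟨h2addl, h2addr, h2smul, h2conj, h2det⟩ := hh₂
  have h2zero_l : ∀ y, h₂ 0 y = 0 := by
    intro y
    have h := h2addl 0 0 y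
    rw [add_zero] at h
    linear_combination -h
  have h2smull : ∀ (a : E) (x y : ⋀[E]^2 V), h₂ (a • x) y = ρ a * h₂ x y := by
    intro a x y
    have h := h2smul a 1 x y
    rw [one_smul, mul_one] at h
    exact h
  have hH21 : ∀ w ∈ V₂, ∀ x ∈ V₁, H w x = 0 := fun w hw x hx => by
    rw [H_conj, horth x hx w hw, map_zero]
  refine ⟨?_, ?_, ?_⟩
  · -- ### part (i)
    intro z hz
    have hz01 : ∀ u ∈ P, h₂ u (m 0 1) = 0 := by
      intro u₀ hu₀
      induction hu₀ using Submodule.span_induction with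
      | mem w hw =>
        obtain ⟨v, hv, w', hw', rfl⟩ := hw
        rw [hm_wedge, h2det]
        apply Matrix.det_eq_zero_of_row_eq_zero 1
        intro j
        simp only [Matrix.of_apply, Matrix.cons_val_one, Matrix.head_cons]
        fin_cases j
        · simp only [Matrix.cons_val_zero]
          exact hH21 w' hw' (e 0) he0
        · simp only [Matrix.cons_val_one, Matrix.head_cons]
          exact hH21 w' hw' (e 1) he1
      | zero => exact h2zero_l _
      | add u u' _ _ ih ih' => rw [h2addl, ih, ih', add_zero]
      | smul a u _ ih => rw [h2smull, ih, mul_zero]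
    have hz23 : ∀ u ∈ P, h₂ u (m 2 3) = 0 := by
      intro u₀ hu₀
      induction hu₀ using Submodule.span_induction with
      | mem w hw =>
        obtain ⟨v, hv, w', hw', rfl⟩ := hw
        rw [hm_wedge, h2det]
        apply Matrix.det_eq_zero_of_row_eq_zero 0
        intro j
        simp only [Matrix.of_apply, Matrix.cons_val_zero]
        fin_cases j
        · simp only [Matrix.cons_val_zero]
          exact horth v hv (e 2) he2
        · simp only [Matrix.cons_val_one, Matrix.head_cons]
          exact horth v hv (e 3) he3
      | zero => exact h2zero_l _
      | add u u' _ _ ih ih' => rw [h2addl, ih, ih', add_zero]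
      | smul a u _ ih => rw [h2smull, ih, mul_zero]
    exact M1 (L z) (by rw [L_def]; exact hz01 z hz) (by rw [L_def]; exact hz23 z hz)
  · -- ### part (ii)
    intro z hz
    have hperp : ∀ k l : Fin 4, e k ∈ V₁ → e l ∈ V₂ → h₂ z (m k l) = 0 := by
      intro k l hk hl
      have hQ1perp : ∀ u ∈ Q₁, h₂ u (m k l) = 0 := by
        intro u hu
        induction hu using Submodule.span_induction with
        | mem w hw =>
          obtain ⟨v, hv, w', hw', rfl⟩ := hw
          rw [hm_wedge, h2det]
          apply Matrix.det_eq_zero_of_column_eq_zero 1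
          intro i
          simp only [Matrix.of_apply, Matrix.cons_val_one, Matrix.head_cons]
          fin_cases i
          · simp only [Matrix.cons_val_zero]
            exact horth v hv (e l) hl
          · simp only [Matrix.cons_val_one, Matrix.head_cons]
            exact horth w' hw' (e l) hl
        | zero => exact h2zero_l _
        | add u u' _ _ ih ih' => rw [h2addl, ih, ih', add_zero]
        | smul a u _ ih => rw [h2smull, ih, mul_zero]
      have hQ2perp : ∀ u ∈ Q₂, h₂ u (m k l) = 0 := by
        intro u hu
        induction hu using Submodule.span_induction with
        | mem w hw =>
          obtain ⟨v, hv, w', hw', rfl⟩ := hw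
          rw [hm_wedge, h2det]
          apply Matrix.det_eq_zero_of_column_eq_zero 0
          intro i
          simp only [Matrix.of_apply, Matrix.cons_val_zero]
          fin_cases i
          · simp only [Matrix.cons_val_zero]
            exact hH21 v hv (e k) hk
          · simp only [Matrix.cons_val_one, Matrix.head_cons]
            exact hH21 w' hw' (e k) hk
        | zero => exact h2zero_l _
        | add u u' _ _ ih ih' => rw [h2addl, ih, ih', add_zero]
        | smul a u _ ih => rw [h2smull, ih, mul_zero]
      obtain ⟨z1, hz1, z2, hz2, hzz⟩ := Submodule.mem_sup.mp hz
      rw [← hzz, h2addl, hQ1perp z1 hz1, hQ2perp z2 hz2, add_zero]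
    exact M2 (L z) (by rw [L_def]; exact hperp 0 2 he0 he2)
      (by rw [L_def]; exact hperp 0 3 he0 he3)
      (by rw [L_def]; exact hperp 1 2 he1 he2)
      (by rw [L_def]; exact hperp 1 3 he1 he3)
  · -- ### part (iii)
    intro g ν hν hgH hg₁ hg₂ Λg hΛ
    have hdetpart : ∀ (W : Submodule E V) (b : Module.Basis (Fin 2) E W)
        (hgW : ∀ x ∈ W, (g : V →ₗ[E] V) x ∈ W),
        ∀ z ∈ wedgeSpan E W W,
          Λg z = LinearMap.det ((g : V →ₗ[E] V).restrict hgW) • z := by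
      intro W b hgW z hz
      induction hz using Submodule.span_induction with
      | mem w hw =>
        obtain ⟨v, hv, w', hw', rfl⟩ := hw
        rw [hΛ]
        have hcomp : ⇑g ∘ ![v, w'] = ![g v, g w'] := by
          funext i; fin_cases i <;> rfl
        rw [hcomp]
        set g₁ := (g : V →ₗ[E] V).restrict hgW with hg₁def
        set ωA : ↥W [⋀^Fin 2]→ₗ[E] ExteriorAlgebra E V :=
          (ιMulti E 2 (M := V)).compLinearMap W.subtype with hωdef
        set u : Fin 2 → ↥W := ![⟨v, hv⟩, ⟨w', hw'⟩] with hudef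
        have h1 : ωA u = ιMulti E 2 ![v, w'] := by
          show ιMulti E 2 (⇑W.subtype ∘ u) = _
          congr 1
          funext i; fin_cases i <;> rfl
        have h2 : ωA (⇑g₁ ∘ u) = ιMulti E 2 ![g v, g w'] := by
          show ιMulti E 2 (⇑W.subtype ∘ (⇑g₁ ∘ u)) = _
          congr 1
          funext i
          fin_cases i
          · show ((g₁ ⟨v, hv⟩ : ↥W) : V) = g v
            rw [hg₁def, LinearMap.restrict_coe_apply]
            rfl
          · show ((g₁ ⟨w', hw'⟩ : ↥W) : V) = g w'
            rw [hg₁def, LinearMap.restrict_coe_apply]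
            rfl
        have h3 : ωA (⇑g₁ ∘ u) = LinearMap.det g₁ • ωA u := by
          rw [aux_alt_eq_det_smul b ωA (⇑g₁ ∘ u), aux_alt_eq_det_smul b ωA u,
            Module.Basis.det_comp, mul_smul]
        apply Subtype.ext
        show ιMulti E 2 ![g v, g w']
          = ((LinearMap.det g₁ • wedgeι E 2 ![v, w'] : ⋀[E]^2 V) : ExteriorAlgebra E V)
        rw [Submodule.coe_smul, aux_wedgeι_val, ← h1, ← h2, h3]
      | zero => rw [map_zero, smul_zero]
      | add u u' _ _ ih ih' => rw [map_add, ih, ih', smul_add]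
      | smul a u _ ih => rw [map_smul, ih, smul_comm]
    refine ⟨hdetpart V₁ b₁ hg₁, hdetpart V₂ b₂ hg₂, ?_⟩
    intro x hx y hy
    have hcomp : ⇑g ∘ ![x, y] = ![g x, g y] := by funext i; fin_cases i <;> rfl
    have h1 : Λg (wedgeι E 2 ![x, y]) = wedgeι E 2 ![g x, g y] := by rw [hΛ, hcomp]
    refine ⟨h1, ?_⟩
    rw [h1]
    exact subset_span ⟨g x, hg₁ x hx, g y, hg₂ y hy, rfl⟩
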